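/- If E_A is a primitive quantum channel (i.e., there exists n such that E_A^n(|φ⟩⟨φ|) is full rank for every unit vector φ), then E_A^m is primitive for every m ∈ ℕ, and H_n(A,φ) = ℂ^D for all n ≥ q(E_A) and all unit vectors φ. -/

import Mathlib

open Matrix
open scoped ComplexOrder

variable {D : ℕ} {ι : Type*} [Fintype ι]

/-- The completely positive map with Kraus operators `A k`. -/
noncomputable def krausMap (A : ι → Matrix (Fin D) (Fin D) ℂ)
    (X : Matrix (Fin D) (Fin D) ℂ) : Matrix (Fin D) (Fin D) ℂ :=
  ∑ k, A k * X * (A k)ᴴ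

/-- The product `A_{w 0} * A_{w 1} * ⋯ * A_{w (n-1)}` of Kraus operators along a word `w`. -/
noncomputable def wordProd (A : ι → Matrix (Fin D) (Fin D) ℂ) {n : ℕ} (w : Fin n → ι) :
    Matrix (Fin D) (Fin D) ℂ :=
  (List.ofFn fun i => A (w i)).prod

/-- `S_n(A)`: the span of all products of exactly `n` Kraus operators. -/
noncomputable def krausSpan (A : ι → Matrix (Fin D) (Fin D) ℂ) (n : ℕ) :
    Submodule ℂ (Matrix (Fin D) (Fin D) ℂ) :=
  Submodule.span ℂ {M | ∃ w : Fin n → ι, M = wordProd A w}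

/-- `H_n(A,φ) = S_n(A)|φ⟩`. -/
noncomputable def krausVecSpan (A : ι → Matrix (Fin D) (Fin D) ℂ) (n : ℕ)
    (φ : Fin D → ℂ) : Submodule ℂ (Fin D → ℂ) :=
  Submodule.span ℂ {v | ∃ w : Fin n → ι, v = wordProd A w *ᵥ φ}

/-- A quantum channel is primitive if some power maps every pure state to a
positive definite (full-rank) operator. -/
def Primitive (A : ι → Matrix (Fin D) (Fin D) ℂ) : Prop :=
  ∃ n, ∀ φ : Fin D → ℂ, φ ≠ 0 →
    ((krausMap A)^[n] (vecMulVec φ (star φ))).PosDef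

/-- `q(E_A)`: the quantum index of primitivity. -/
noncomputable def qIndex (A : ι → Matrix (Fin D) (Fin D) ℂ) : ℕ :=
  sInf {n | ∀ φ : Fin D → ℂ, φ ≠ 0 →
    ((krausMap A)^[n] (vecMulVec φ (star φ))).PosDef}

/-- `i(A)`: the minimal `n` with `S_n(A) = M_D`. -/
noncomputable def iIndex (A : ι → Matrix (Fin D) (Fin D) ℂ) : ℕ :=
  sInf {n | krausSpan A n = ⊤}

/-- Trace preservation, `∑ k, A_k† A_k = 1`. -/
def TracePreserving (A : ι → Matrix (Fin D) (Fin D) ℂ) : Prop :=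
  ∑ k, (A k)ᴴ * A k = 1

lemma sum_mulVec' {α : Type*} (s : Finset α) (f : α → Matrix (Fin D) (Fin D) ℂ)
    (v : Fin D → ℂ) : (∑ k ∈ s, f k) *ᵥ v = ∑ k ∈ s, f k *ᵥ v := by
  classical
  induction s using Finset.induction_on with
  | empty => simp
  | insert a s h ih => rw [Finset.sum_insert h, Finset.sum_insert h, Matrix.add_mulVec, ih]

lemma wordProd_nil (A : ι → Matrix (Fin D) (Fin D) ℂ) (w : Fin 0 → ι) :
    wordProd A w = 1 := by simp [wordProd]

lemma wordProd_cons (A : ι → Matrix (Fin D) (Fin D) ℂ) {n : ℕ} (k : ι) (w : Fin n → ι) :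
    wordProd A (Fin.cons k w) = A k * wordProd A w := by
  simp [wordProd, List.ofFn_succ, Function.comp]

lemma krausMap_iter (A : ι → Matrix (Fin D) (Fin D) ℂ) (n : ℕ)
    (X : Matrix (Fin D) (Fin D) ℂ) :
    (krausMap A)^[n] X = ∑ w : Fin n → ι, wordProd A w * X * (wordProd A w)ᴴ := by
  induction n generalizing X with
  | zero => simp [wordProd_nil]
  | succ n ih =>
    rw [Function.iterate_succ_apply', ih, krausMap]
    have h1 : ∀ k : ι, A k * (∑ w : Fin n → ι, wordProd A w * X * (wordProd A w)ᴴ) * (A k)ᴴ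
        = ∑ w : Fin n → ι, wordProd A (Fin.cons k w) * X * (wordProd A (Fin.cons k w))ᴴ := by
      intro k
      rw [Finset.mul_sum, Finset.sum_mul]
      refine Finset.sum_congr rfl fun w _ => ?_
      simp [wordProd_cons, conjTranspose_mul, Matrix.mul_assoc]
    simp_rw [h1]
    exact (Fintype.sum_prod_type (f := fun p : ι × (Fin n → ι) =>
        wordProd A (Fin.cons p.1 p.2) * X * (wordProd A (Fin.cons p.1 p.2))ᴴ)).symm.trans
      (Fintype.sum_equiv (Fin.consEquiv fun _ => ι) _ _ fun p => rfl)

lemma vecMulVec_mulVec' (u w x : Fin D → ℂ) :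
    vecMulVec u w *ᵥ x = (w ⬝ᵥ x) • u := by
  ext i
  simp [mulVec, vecMulVec_apply, dotProduct, Finset.mul_sum, mul_comm, mul_assoc, mul_left_comm]

lemma conj_vecMulVec (M : Matrix (Fin D) (Fin D) ℂ) (φ : Fin D → ℂ) :
    M * vecMulVec φ (star φ) * Mᴴ = vecMulVec (M *ᵥ φ) (star (M *ᵥ φ)) := by
  ext i j
  simp only [mul_apply, vecMulVec_apply, conjTranspose_apply, mulVec, dotProduct,
    Pi.star_apply, Finset.sum_mul, Finset.mul_sum, star_sum, star_mul']
  refine Finset.sum_congr rfl fun a _ => Finset.sum_congr rfl fun b _ => ?_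
  ring

lemma posSemidef_vecMulVec (φ : Fin D → ℂ) : (vecMulVec φ (star φ)).PosSemidef := by
  refine posSemidef_iff_dotProduct_mulVec.mpr ⟨?_, ?_⟩
  · ext i j
    simp [conjTranspose_apply, vecMulVec_apply, mul_comm]
  · intro x
    rw [vecMulVec_mulVec', dotProduct_smul]
    have : star x ⬝ᵥ φ = star (star φ ⬝ᵥ x) := by
      simp [dotProduct, star_sum, mul_comm]
    rw [smul_eq_mul, this]
    exact mul_star_self_nonneg _

lemma primAt_succ (A : ι → Matrix (Fin D) (Fin D) ℂ) (hTP : TracePreserving A) (n : ℕ)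
    (h : ∀ φ : Fin D → ℂ, φ ≠ 0 → ((krausMap A)^[n] (vecMulVec φ (star φ))).PosDef) :
    ∀ φ : Fin D → ℂ, φ ≠ 0 → ((krausMap A)^[n+1] (vecMulVec φ (star φ))).PosDef := by
  intro φ hφ
  -- some k with A k *ᵥ φ ≠ 0
  obtain ⟨k0, hk0⟩ : ∃ k, A k *ᵥ φ ≠ 0 := by
    by_contra hc
    push_neg at hc
    apply hφ
    have : (∑ k, (A k)ᴴ * A k) *ᵥ φ = 0 := by
      rw [sum_mulVec' _ _ _]
      refine Finset.sum_eq_zero fun k _ => ?_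
      rw [← Matrix.mulVec_mulVec, hc k, Matrix.mulVec_zero]
    rwa [hTP, Matrix.one_mulVec] at this
  rw [Function.iterate_succ_apply]
  have hE : krausMap A (vecMulVec φ (star φ))
      = ∑ k, vecMulVec (A k *ᵥ φ) (star (A k *ᵥ φ)) := by
    unfold krausMap
    exact Finset.sum_congr rfl fun k _ => conj_vecMulVec _ _
  rw [hE]
  have hlin : (krausMap A)^[n] (∑ k, vecMulVec (A k *ᵥ φ) (star (A k *ᵥ φ)))
      = ∑ k, (krausMap A)^[n] (vecMulVec (A k *ᵥ φ) (star (A k *ᵥ φ))) := by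
    rw [krausMap_iter]
    simp_rw [Finset.mul_sum, Finset.sum_mul, krausMap_iter]
    exact Finset.sum_comm
  classical
  rw [hlin, ← Finset.add_sum_erase _ _ (Finset.mem_univ k0)]
  refine Matrix.PosDef.add_posSemidef (h _ hk0) ?_
  refine Finset.sum_induction _ _ (fun a b ha hb => ha.add hb) (Matrix.PosSemidef.zero) ?_
  intro k _
  rw [krausMap_iter]
  refine Finset.sum_induction _ _ (fun a b ha hb => ha.add hb) (Matrix.PosSemidef.zero) ?_
  intro w _
  exact (posSemidef_vecMulVec _).mul_mul_conjTranspose_same _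

lemma primAt_mono (A : ι → Matrix (Fin D) (Fin D) ℂ) (hTP : TracePreserving A) {n m : ℕ}
    (hnm : n ≤ m)
    (h : ∀ φ : Fin D → ℂ, φ ≠ 0 → ((krausMap A)^[n] (vecMulVec φ (star φ))).PosDef) :
    ∀ φ : Fin D → ℂ, φ ≠ 0 → ((krausMap A)^[m] (vecMulVec φ (star φ))).PosDef := by
  induction m with
  | zero => simpa [Nat.le_zero.mp hnm] using h
  | succ m ih =>
    rcases Nat.lt_or_ge n (m+1) with hl | hg
    · exact primAt_succ A hTP m (ih (Nat.lt_succ_iff.mp hl))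
    · simpa [Nat.le_antisymm hnm hg] using h

lemma span_top_of_posDef (A : ι → Matrix (Fin D) (Fin D) ℂ) (n : ℕ) (φ : Fin D → ℂ)
    (h : ((krausMap A)^[n] (vecMulVec φ (star φ))).PosDef) :
    krausVecSpan A n φ = ⊤ := by
  set M := (krausMap A)^[n] (vecMulVec φ (star φ)) with hM
  have hMinv : M * M⁻¹ = 1 := Matrix.mul_nonsing_inv M (isUnit_iff_ne_zero.mpr h.det_pos.ne')
  rw [eq_top_iff]
  intro v _
  have hv : v = M *ᵥ (M⁻¹ *ᵥ v) := by
    rw [Matrix.mulVec_mulVec, hMinv, Matrix.one_mulVec]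
  rw [hv, hM, krausMap_iter]
  simp_rw [conj_vecMulVec, sum_mulVec', vecMulVec_mulVec']
  refine Submodule.sum_mem _ fun w _ => Submodule.smul_mem _ _ ?_
  exact Submodule.subset_span ⟨w, rfl⟩

theorem stmt4 (D : ℕ) {ι : Type*} [Fintype ι] (A : ι → Matrix (Fin D) (Fin D) ℂ)
    (hTP : TracePreserving A) (hprim : Primitive A) :
    (∀ m : ℕ, 0 < m → ∃ n, ∀ φ : Fin D → ℂ, φ ≠ 0 →
        (((krausMap A)^[m])^[n] (vecMulVec φ (star φ))).PosDef)
    ∧ ∀ n, qIndex A ≤ n → ∀ φ : Fin D → ℂ, φ ≠ 0 → krausVecSpan A n φ = ⊤ := by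
  obtain ⟨N, hN⟩ := hprim
  constructor
  · intro m hm
    refine ⟨N, fun φ hφ => ?_⟩
    rw [← Function.iterate_mul]
    exact primAt_mono A hTP (Nat.le_mul_of_pos_left N hm) hN φ hφ
  · intro n hn φ hφ
    have hq : qIndex A ∈ {n | ∀ φ : Fin D → ℂ, φ ≠ 0 →
        ((krausMap A)^[n] (vecMulVec φ (star φ))).PosDef} :=
      Nat.sInf_mem ⟨N, hN⟩
    exact span_top_of_posDef A n φ (primAt_mono A hTP hn hq φ hφ)
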